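/- Let N ≥ 1, p₁, p₂ ∈ ℂ, and let u : ℤ → ℤ → ZMod N → ℂ. Suppose u satisfies, for all n, m ∈ ℤ and h ∈ ZMod N, the quadrilateral system in product form: (p₁ + u n (m+1) (h+1) − u (n+1) (m+1) h)·(p₂ + u n m (h+1) − u n (m+1) h) = (p₂ + u (n+1) m (h+1) − u (n+1) (m+1) h)·(p₁ + u n m (h+1) − u (n+1) m h). Fix n, m and let f : ZMod N → ℂ be arbitrary. Define g, g' : ZMod N → ℂ by g h = (p₂ + u n m (h+1) − u n (m+1) h)·f h + f (h+1) and g' h = (p₁ + u n m (h+1) − u (n+1) m h)·f h + f (h+1). Then for all h ∈ ZMod N: (p₁ + u n (m+1) (h+1) − u (n+1) (m+1) h)·g h + g (h+1) = (p₂ + u (n+1) m (h+1) − u (n+1) (m+1) h)·g' h + g' (h+1). -/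
import Mathlib

theorem lax_pair_compatibility (N : ℕ) (hN : 1 ≤ N) (p₁ p₂ : ℂ)
    (u : ℤ → ℤ → ZMod N → ℂ)
    (hu : ∀ (n m : ℤ) (h : ZMod N),
      (p₁ + u n (m+1) (h+1) - u (n+1) (m+1) h) * (p₂ + u n m (h+1) - u n (m+1) h)
        = (p₂ + u (n+1) m (h+1) - u (n+1) (m+1) h) * (p₁ + u n m (h+1) - u (n+1) m h))
    (n m : ℤ) (f : ZMod N → ℂ)
    (g g' : ZMod N → ℂ)
    (hg : ∀ h, g h = (p₂ + u n m (h+1) - u n (m+1) h) * f h + f (h+1))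
    (hg' : ∀ h, g' h = (p₁ + u n m (h+1) - u (n+1) m h) * f h + f (h+1)) :
    ∀ h : ZMod N,
      (p₁ + u n (m+1) (h+1) - u (n+1) (m+1) h) * g h + g (h+1)
        = (p₂ + u (n+1) m (h+1) - u (n+1) (m+1) h) * g' h + g' (h+1) := by
  intro h
  rw [hg, hg, hg', hg']
  linear_combination f h * hu n m h
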